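/- Let ρ be a Hermitian 2^n × 2^n matrix with Tr(ρ) = 1. Define the Dirac operators d_j = (c_{2j−1} + i c_{2j})/2 for 1 ≤ j ≤ n, and let D be the 2n × 2n complex matrix given in block form by D = [[A, B], [B̃, Ã]], where A_{jk} = Tr(ρ d_j† d_k), B_{jk} = Tr(ρ d_j d_k), B̃_{jk} = Tr(ρ d_j† d_k†), and Ã_{jk} = Tr(ρ d_j d_k†). Then the dynamical-Lie-algebra purity P₂(ρ) = 2^{−n} Σ_{1 ≤ μ < ν ≤ 2n} |Tr(ρ c_μ c_ν)|² satisfies P₂(ρ) = (2 Tr(D²) − n) / 2^n; equivalently, P₂(ρ) = (n − S₂(ρ)) / 2^n where S₂(ρ) := 2 Tr(D(I − D)) is the linear-entropy fermionic entanglement measure of ρ. -/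

import Mathlib

open Matrix Complex
open scoped Kronecker

noncomputable section

abbrev QIdx (n : ℕ) := Fin n → Fin 2
abbrev NMat (n : ℕ) := Matrix (QIdx n) (QIdx n) ℂ
abbrev NMat2 (n : ℕ) := Matrix (QIdx n × QIdx n) (QIdx n × QIdx n) ℂ

/-- The 2×2 Pauli X matrix. -/
def σX : Matrix (Fin 2) (Fin 2) ℂ := !![0, 1; 1, 0]
/-- The 2×2 Pauli Y matrix. -/
def σY : Matrix (Fin 2) (Fin 2) ℂ := !![0, -Complex.I; Complex.I, 0]
/-- The 2×2 Pauli Z matrix. -/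
def σZ : Matrix (Fin 2) (Fin 2) ℂ := !![1, 0; 0, -1]

/-- Tensor (Kronecker) product of `n` one-qubit matrices, realized on index type `Fin n → Fin 2`. -/
def tensor {n : ℕ} (M : Fin n → Matrix (Fin 2) (Fin 2) ℂ) : NMat n :=
  Matrix.of fun f g => ∏ i, M i (f i) (g i)

/-- The Jordan–Wigner Majorana operator `c_μ` (0-based index: `c_{2i} = Z^{⊗i} X I…`,
`c_{2i+1} = Z^{⊗i} Y I…`). -/
def majorana (n : ℕ) (μ : Fin (2 * n)) : NMat n :=
  tensor fun j =>
    if (j : ℕ) < (μ : ℕ) / 2 then σZ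
    else if (j : ℕ) = (μ : ℕ) / 2 then (if (μ : ℕ) % 2 = 0 then σX else σY)
    else 1

/-- Ordered product `c^s` of the Majorana operators indexed by a subset `s`. -/
def cProd (n : ℕ) (s : Finset (Fin (2 * n))) : NMat n :=
  ((s.sort (· ≤ ·)).map (majorana n)).prod

/-- The module `B_κ`: the complex span of products of `κ` distinct Majoranas. -/
def Bspace (n κ : ℕ) : Submodule ℂ (NMat n) :=
  Submodule.span ℂ {M | ∃ s : Finset (Fin (2 * n)), s.card = κ ∧ M = cProd n s}

/-- The Pauli string with `Z` on qubit `j` and identity elsewhere. -/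
def pauliZ (n : ℕ) (j : Fin n) : NMat n := tensor fun k => if k = j then σZ else 1

/-- The Pauli string with `X` on qubits `j` and `j+1` and identity elsewhere. -/
def pauliXX (n : ℕ) (j : Fin n) : NMat n :=
  tensor fun k => if (k : ℕ) = (j : ℕ) ∨ (k : ℕ) = (j : ℕ) + 1 then σX else 1

/-- The parity operator `P = Z^{⊗n}`. -/
def parity (n : ℕ) : NMat n := tensor fun _ => σZ


/-- The Dirac fermionic operator `d_j = (c_{2j−1} + i c_{2j})/2` (0-based indexing). -/
def dirac (n : ℕ) (j : Fin n) : NMat n :=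
  (2 : ℂ)⁻¹ • (majorana n ⟨2 * (j : ℕ), by have := j.isLt; omega⟩ +
    Complex.I • majorana n ⟨2 * (j : ℕ) + 1, by have := j.isLt; omega⟩)

/-- The extended one-body reduced density matrix
`D = [[⟨d† d⟩, ⟨d d⟩], [⟨d† d†⟩, ⟨d d†⟩]]` of a state `ρ`. -/
def Dmat (n : ℕ) (ρ : NMat n) : Matrix (Fin n ⊕ Fin n) (Fin n ⊕ Fin n) ℂ :=
  Matrix.fromBlocks
    (Matrix.of fun j k => Matrix.trace (ρ * ((dirac n j)ᴴ * dirac n k)))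
    (Matrix.of fun j k => Matrix.trace (ρ * (dirac n j * dirac n k)))
    (Matrix.of fun j k => Matrix.trace (ρ * ((dirac n j)ᴴ * (dirac n k)ᴴ)))
    (Matrix.of fun j k => Matrix.trace (ρ * (dirac n j * (dirac n k)ᴴ)))

/-- The Lie-algebra purity `P₂(ρ) = 2^{−n} Σ_{μ<ν} |Tr(ρ c_μ c_ν)|²`. -/
def gPurity (n : ℕ) (ρ : NMat n) : ℝ :=
  (2 ^ n : ℝ)⁻¹ * ∑ μ : Fin (2 * n), ∑ ν : Fin (2 * n),
    if μ < ν then ‖Matrix.trace (ρ * (majorana n μ * majorana n ν))‖ ^ 2 else 0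

lemma tensor_mul {n : ℕ} (M N : Fin n → Matrix (Fin 2) (Fin 2) ℂ) :
    tensor M * tensor N = tensor (fun i => M i * N i) := by
  ext f g
  simp only [tensor, Matrix.mul_apply, Matrix.of_apply]
  rw [Finset.prod_univ_sum]
  rw [Fintype.piFinset_univ]
  exact Finset.sum_congr rfl fun x _ => (Finset.prod_mul_distrib).symm

lemma tensor_one {n : ℕ} : tensor (fun _ : Fin n => (1 : Matrix (Fin 2) (Fin 2) ℂ)) = 1 := by
  ext f g
  simp [tensor, Matrix.one_apply, Finset.prod_boole, funext_iff]

lemma tensor_conjT {n : ℕ} (M : Fin n → Matrix (Fin 2) (Fin 2) ℂ) :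
    (tensor M)ᴴ = tensor (fun i => (M i)ᴴ) := by
  ext f g
  simp [tensor, Matrix.conjTranspose_apply, map_prod]

lemma σX_sq : σX * σX = 1 := by
  ext i j; fin_cases i <;> fin_cases j <;> simp [σX, Matrix.mul_apply, Fin.sum_univ_two]
lemma σY_sq : σY * σY = 1 := by
  ext i j; fin_cases i <;> fin_cases j <;>
    simp [σY, Matrix.mul_apply, Fin.sum_univ_two, Complex.I_mul_I]
lemma σZ_sq : σZ * σZ = 1 := by
  ext i j; fin_cases i <;> fin_cases j <;> simp [σZ, Matrix.mul_apply, Fin.sum_univ_two]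
lemma σX_herm : σXᴴ = σX := by
  ext i j; fin_cases i <;> fin_cases j <;> simp [σX]
lemma σY_herm : σYᴴ = σY := by
  ext i j; fin_cases i <;> fin_cases j <;> simp [σY]
lemma σZ_herm : σZᴴ = σZ := by
  ext i j; fin_cases i <;> fin_cases j <;> simp [σZ]

lemma majorana_sq {n : ℕ} (μ : Fin (2 * n)) : majorana n μ * majorana n μ = 1 := by
  rw [majorana, tensor_mul, ← tensor_one]
  refine congrArg tensor (funext fun i => ?_)
  split_ifs <;> simp [σZ_sq, σX_sq, σY_sq]

lemma majorana_herm {n : ℕ} (μ : Fin (2 * n)) : (majorana n μ)ᴴ = majorana n μ := by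
  rw [majorana, tensor_conjT]
  refine congrArg tensor (funext fun i => ?_)
  split_ifs <;> simp [σZ_herm, σX_herm, σY_herm]

variable {n : ℕ}

/-- `T μ ν = Tr(ρ c_μ c_ν)`. -/
def Tm (n : ℕ) (ρ : NMat n) (μ ν : Fin (2 * n)) : ℂ :=
  Matrix.trace (ρ * (majorana n μ * majorana n ν))

def mi0 (j : Fin n) : Fin (2 * n) := ⟨2 * (j : ℕ), by have := j.isLt; omega⟩
def mi1 (j : Fin n) : Fin (2 * n) := ⟨2 * (j : ℕ) + 1, by have := j.isLt; omega⟩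

lemma dirac_eq (j : Fin n) :
    dirac n j = (2 : ℂ)⁻¹ • (majorana n (mi0 j) + Complex.I • majorana n (mi1 j)) := rfl

lemma dirac_conjT (j : Fin n) :
    (dirac n j)ᴴ = (2 : ℂ)⁻¹ • (majorana n (mi0 j) + (-Complex.I) • majorana n (mi1 j)) := by
  rw [dirac_eq]
  simp [Matrix.conjTranspose_smul, Matrix.conjTranspose_add, majorana_herm, Complex.conj_I,
    neg_smul]

lemma trace_comb (ρ P Q R S : NMat n) (x y : ℂ) :
    Matrix.trace (ρ * (((2:ℂ)⁻¹ • (P + x • Q)) * ((2:ℂ)⁻¹ • (R + y • S)))) =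
    (Matrix.trace (ρ*(P*R)) + y * Matrix.trace (ρ*(P*S)) + x * Matrix.trace (ρ*(Q*R))
      + x*y*Matrix.trace (ρ*(Q*S)))/4 := by
  simp only [Matrix.smul_mul, Matrix.mul_smul, Matrix.mul_add, Matrix.add_mul, smul_smul,
    smul_add, Matrix.trace_add, Matrix.trace_smul, smul_eq_mul]
  ring

def fe (n : ℕ) : Fin n × Fin 2 ≃ Fin (2 * n) :=
    { toFun := fun x => ⟨2 * (x.1 : ℕ) + (x.2 : ℕ), by
        have := x.1.isLt; have := x.2.isLt; omega⟩
      invFun := fun μ => (⟨(μ : ℕ) / 2, by have := μ.isLt; omega⟩,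
        ⟨(μ : ℕ) % 2, by omega⟩)
      left_inv := fun x => by
        have := x.2.isLt
        ext <;> simp <;> omega
      right_inv := fun μ => by ext; simp; omega }

lemma sum_split (f : Fin (2 * n) → ℂ) :
    ∑ μ, f μ = ∑ j : Fin n, (f (mi0 j) + f (mi1 j)) := by
  rw [← Equiv.sum_comp (fe n) f, Fintype.sum_prod_type]
  refine Finset.sum_congr rfl fun j _ => ?_
  rw [Fin.sum_univ_two]
  congr 1 <;> · congr 1; apply Fin.ext; simp [fe, mi0, mi1]

variable (ρ : NMat n)

lemma entryA (j k : Fin n) :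
    Matrix.trace (ρ * ((dirac n j)ᴴ * dirac n k)) =
      (Tm n ρ (mi0 j) (mi0 k) + Complex.I * Tm n ρ (mi0 j) (mi1 k)
        + (-Complex.I) * Tm n ρ (mi1 j) (mi0 k)
        + (-Complex.I) * Complex.I * Tm n ρ (mi1 j) (mi1 k)) / 4 := by
  rw [dirac_conjT, dirac_eq, trace_comb]; rfl

lemma entryB (j k : Fin n) :
    Matrix.trace (ρ * (dirac n j * dirac n k)) =
      (Tm n ρ (mi0 j) (mi0 k) + Complex.I * Tm n ρ (mi0 j) (mi1 k)
        + Complex.I * Tm n ρ (mi1 j) (mi0 k)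
        + Complex.I * Complex.I * Tm n ρ (mi1 j) (mi1 k)) / 4 := by
  rw [dirac_eq, dirac_eq, trace_comb]; rfl

lemma entryC (j k : Fin n) :
    Matrix.trace (ρ * ((dirac n j)ᴴ * (dirac n k)ᴴ)) =
      (Tm n ρ (mi0 j) (mi0 k) + (-Complex.I) * Tm n ρ (mi0 j) (mi1 k)
        + (-Complex.I) * Tm n ρ (mi1 j) (mi0 k)
        + (-Complex.I) * (-Complex.I) * Tm n ρ (mi1 j) (mi1 k)) / 4 := by
  rw [dirac_conjT, dirac_conjT, trace_comb]; rfl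

lemma entryE (j k : Fin n) :
    Matrix.trace (ρ * (dirac n j * (dirac n k)ᴴ)) =
      (Tm n ρ (mi0 j) (mi0 k) + (-Complex.I) * Tm n ρ (mi0 j) (mi1 k)
        + Complex.I * Tm n ρ (mi1 j) (mi0 k)
        + Complex.I * (-Complex.I) * Tm n ρ (mi1 j) (mi1 k)) / 4 := by
  rw [dirac_eq, dirac_conjT, trace_comb]; rfl

lemma key1 :
    Matrix.trace (Dmat n ρ * Dmat n ρ) =
      (∑ μ, ∑ ν, Tm n ρ μ ν * Tm n ρ ν μ) / 4 := by
  have hrhs : (∑ μ, ∑ ν, Tm n ρ μ ν * Tm n ρ ν μ)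
      = ∑ j : Fin n, ∑ k : Fin n,
        (Tm n ρ (mi0 j) (mi0 k) * Tm n ρ (mi0 k) (mi0 j)
          + Tm n ρ (mi0 j) (mi1 k) * Tm n ρ (mi1 k) (mi0 j)
          + Tm n ρ (mi1 j) (mi0 k) * Tm n ρ (mi0 k) (mi1 j)
          + Tm n ρ (mi1 j) (mi1 k) * Tm n ρ (mi1 k) (mi1 j)) := by
    rw [sum_split (fun μ => ∑ ν, Tm n ρ μ ν * Tm n ρ ν μ)]
    refine Finset.sum_congr rfl fun j _ => ?_
    rw [sum_split (fun ν => Tm n ρ (mi0 j) ν * Tm n ρ ν (mi0 j)),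
      sum_split (fun ν => Tm n ρ (mi1 j) ν * Tm n ρ ν (mi1 j)), ← Finset.sum_add_distrib]
    refine Finset.sum_congr rfl fun k _ => ?_
    ring
  rw [hrhs]
  have htr2 : Matrix.trace (Dmat n ρ * Dmat n ρ)
      = ∑ a, ∑ b, Dmat n ρ a b * Dmat n ρ b a := by
    simp [Matrix.trace, Matrix.mul_apply, Matrix.diag]
  rw [htr2, Fintype.sum_sum_type]
  simp only [Fintype.sum_sum_type, Dmat, Matrix.fromBlocks_apply₁₁, Matrix.fromBlocks_apply₁₂,
    Matrix.fromBlocks_apply₂₁, Matrix.fromBlocks_apply₂₂, Matrix.of_apply]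
  rw [← Finset.sum_add_distrib, Finset.sum_div]
  refine Finset.sum_congr rfl fun j _ => ?_
  rw [← Finset.sum_add_distrib, ← Finset.sum_add_distrib, ← Finset.sum_add_distrib,
    Finset.sum_div]
  refine Finset.sum_congr rfl fun k _ => ?_
  rw [entryA, entryA, entryB, entryC, entryB, entryC, entryE, entryE]
  simp only [neg_mul, mul_neg, Complex.I_mul_I, neg_neg]
  ring_nf
  simp only [Complex.I_sq]
  ring

lemma key3 (htr : Matrix.trace ρ = 1) :
    Matrix.trace (Dmat n ρ) = (n : ℂ) := by
  have hdiag : ∀ μ : Fin (2 * n), Tm n ρ μ μ = 1 := by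
    intro μ; rw [Tm, majorana_sq, mul_one, htr]
  have hApt : ∀ j : Fin n,
      Matrix.trace (ρ * ((dirac n j)ᴴ * dirac n j))
      + Matrix.trace (ρ * (dirac n j * (dirac n j)ᴴ)) = 1 := by
    intro j
    rw [entryA, entryE, hdiag, hdiag]
    simp only [neg_mul, mul_neg, Complex.I_mul_I, neg_neg]
    ring
  have h0 : Matrix.trace (Dmat n ρ) = ∑ a, Dmat n ρ a a := by
    simp [Matrix.trace, Matrix.diag]
  rw [h0, Fintype.sum_sum_type]
  simp only [Dmat, Matrix.fromBlocks_apply₁₁, Matrix.fromBlocks_apply₂₂, Matrix.of_apply]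
  rw [← Finset.sum_add_distrib, Finset.sum_congr rfl fun j _ => hApt j]
  simp

lemma key2 (hρ : ρ.IsHermitian) (htr : Matrix.trace ρ = 1) :
    (∑ μ, ∑ ν, Tm n ρ μ ν * Tm n ρ ν μ)
      = 2 * (n : ℂ) + 2 * ∑ μ, ∑ ν,
          if μ < ν then ((‖Tm n ρ μ ν‖ ^ 2 : ℝ) : ℂ) else 0 := by
  have hconj : ∀ μ ν, (starRingEnd ℂ) (Tm n ρ μ ν) = Tm n ρ ν μ := by
    intro μ ν
    have h1 : (ρ * (majorana n μ * majorana n ν))ᴴ = majorana n ν * majorana n μ * ρ := by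
      rw [Matrix.conjTranspose_mul, Matrix.conjTranspose_mul, majorana_herm, majorana_herm,
        hρ.eq, mul_assoc]
    calc (starRingEnd ℂ) (Tm n ρ μ ν)
        = Matrix.trace ((ρ * (majorana n μ * majorana n ν))ᴴ) := by
          rw [Matrix.trace_conjTranspose]; rfl
      _ = Matrix.trace (majorana n ν * majorana n μ * ρ) := by rw [h1]
      _ = Tm n ρ ν μ := by rw [Matrix.trace_mul_comm]; rfl
  have habs : ∀ μ ν, Tm n ρ μ ν * Tm n ρ ν μ = ((‖Tm n ρ μ ν‖ ^ 2 : ℝ) : ℂ) := by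
    intro μ ν
    rw [← hconj μ ν, Complex.mul_conj, Complex.sq_norm]
  have hdiag : ∀ μ : Fin (2 * n), Tm n ρ μ μ = 1 := by
    intro μ; rw [Tm, majorana_sq, mul_one, htr]
  have hsymm : ∀ μ ν, ((‖Tm n ρ μ ν‖ ^ 2 : ℝ) : ℂ)
      = ((‖Tm n ρ ν μ‖ ^ 2 : ℝ) : ℂ) := by
    intro μ ν; rw [← hconj μ ν, Complex.norm_conj]
  calc (∑ μ, ∑ ν, Tm n ρ μ ν * Tm n ρ ν μ)
      = ∑ μ, ∑ ν, (((if μ = ν then ((‖Tm n ρ μ ν‖ ^ 2 : ℝ) : ℂ) else 0)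
          + if μ < ν then ((‖Tm n ρ μ ν‖ ^ 2 : ℝ) : ℂ) else 0)
          + if ν < μ then ((‖Tm n ρ μ ν‖ ^ 2 : ℝ) : ℂ) else 0) := by
        refine Finset.sum_congr rfl fun μ _ => Finset.sum_congr rfl fun ν _ => ?_
        rw [habs]
        rcases lt_trichotomy μ ν with h | h | h
        · simp [h, h.ne, not_lt.mpr h.le]
        · simp [h, lt_irrefl]
        · simp [h, h.ne', not_lt.mpr h.le]
    _ = 2 * (n : ℂ) + 2 * ∑ μ, ∑ ν,
          if μ < ν then ((‖Tm n ρ μ ν‖ ^ 2 : ℝ) : ℂ) else 0 := by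
        simp only [Finset.sum_add_distrib]
        have h1 : (∑ μ : Fin (2*n), ∑ ν : Fin (2*n),
            if μ = ν then ((‖Tm n ρ μ ν‖ ^ 2 : ℝ) : ℂ) else 0) = 2 * (n : ℂ) := by
          simp only [Finset.sum_ite_eq, Finset.mem_univ, if_true]
          have : ∀ μ : Fin (2*n), ((‖Tm n ρ μ μ‖ ^ 2 : ℝ) : ℂ) = 1 := by
            intro μ; rw [hdiag]; simp
          rw [Finset.sum_congr rfl fun μ _ => this μ]
          simp only [Finset.sum_const, Finset.card_univ, Fintype.card_fin, nsmul_eq_mul,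
            mul_one]
          push_cast; ring
        have h2 : (∑ μ : Fin (2*n), ∑ ν : Fin (2*n),
            if ν < μ then ((‖Tm n ρ μ ν‖ ^ 2 : ℝ) : ℂ) else 0)
            = ∑ μ : Fin (2*n), ∑ ν : Fin (2*n),
            if μ < ν then ((‖Tm n ρ μ ν‖ ^ 2 : ℝ) : ℂ) else 0 := by
          rw [Finset.sum_comm]
          exact Finset.sum_congr rfl fun μ _ => Finset.sum_congr rfl fun ν _ => by
            rw [hsymm]
        rw [h1, h2]; ring


/-- For a Hermitian state `ρ` with unit trace, the dynamical-Lie-algebra purity satisfies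
`P₂(ρ) = (2 Tr(D²) − n)/2^n = (n − S₂(ρ))/2^n`, where `S₂(ρ) = 2 Tr(D(1 − D))`. -/
theorem gPurity_eq_fermionic_entropy (n : ℕ) (hn : 1 ≤ n) (ρ : NMat n)
    (hρ : ρ.IsHermitian) (htr : Matrix.trace ρ = 1) :
    ((gPurity n ρ : ℝ) : ℂ) =
        (2 * Matrix.trace (Dmat n ρ * Dmat n ρ) - (n : ℂ)) / 2 ^ n
    ∧ ((gPurity n ρ : ℝ) : ℂ) =
        ((n : ℂ) - 2 * Matrix.trace (Dmat n ρ * (1 - Dmat n ρ))) / 2 ^ n := by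
  have k1 := key1 ρ
  have k2 := key2 ρ hρ htr
  have k3 := key3 ρ htr
  set Qc : ℂ := ∑ μ : Fin (2*n), ∑ ν : Fin (2*n),
    if μ < ν then ((‖Tm n ρ μ ν‖ ^ 2 : ℝ) : ℂ) else 0 with hQc
  have hD2 : Matrix.trace (Dmat n ρ * Dmat n ρ) = (2 * (n : ℂ) + 2 * Qc) / 4 := by
    rw [k1, k2]
  have hcast : ((gPurity n ρ : ℝ) : ℂ) = (2 ^ n : ℂ)⁻¹ * Qc := by
    rw [gPurity, hQc]
    push_cast [apply_ite (Complex.ofReal)]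
    rfl
  have h1 : ((gPurity n ρ : ℝ) : ℂ) =
      (2 * Matrix.trace (Dmat n ρ * Dmat n ρ) - (n : ℂ)) / 2 ^ n := by
    rw [hcast, hD2]; ring
  refine ⟨h1, ?_⟩
  have hsub : Matrix.trace (Dmat n ρ * (1 - Dmat n ρ))
      = Matrix.trace (Dmat n ρ) - Matrix.trace (Dmat n ρ * Dmat n ρ) := by
    rw [mul_sub, mul_one, Matrix.trace_sub]
  rw [h1, hsub, k3]; ring

end
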